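/- Let X be a real normed space of dimension ≥ n satisfying property (G). On the space B_as(X, X^{(n−1)}) of antisymmetric bounded linear operators from X into X^{(n−1)}, the function ‖u‖_G := sup over tuples with ‖x₁,...,xₙ‖_G ≠ 0 of |(u(xₙ))(x₁,...,x_{n−1})|/‖x₁,...,xₙ‖_G defines a norm, and this norm is equivalent to the operator norm: ‖u‖_G ≤ ‖u‖_op ≤ n!·‖u‖_G for all u. -/

import Mathlib

/-- The Gähler `n`-norm on a real normed space. -/
noncomputable def gahler {X : Type*} [NormedAddCommGroup X] [NormedSpace ℝ X] {n : ℕ}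
    (x : Fin n → X) : ℝ :=
  sSup {r | ∃ f : Fin n → (X →L[ℝ] ℝ), (∀ i, ‖f i‖ ≤ 1) ∧
    r = |Matrix.det (Matrix.of fun i j => f j (x i))|}

/-- The Miličić functional. -/
noncomputable def milicic {X : Type*} [NormedAddCommGroup X] [NormedSpace ℝ X]
    (τp τm : X → X → ℝ) (x y : X) : ℝ :=
  ‖x‖ / 2 * (τm x y + τp x y)

/-- `u ∈ B(X, X^{(n)})` is antisymmetric (as an `(n+1)`-functional). -/
def IsAntisym {X : Type*} [NormedAddCommGroup X] [NormedSpace ℝ X] {n : ℕ}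
    (u : X →L[ℝ] ContinuousMultilinearMap ℝ (fun _ : Fin n => X) ℝ) : Prop :=
  ∀ (x : Fin (n + 1) → X) (σ : Equiv.Perm (Fin (n + 1))),
    u (x (Fin.last n)) (fun i => x i.castSucc) =
      (Equiv.Perm.sign σ : ℤ) * u (x (σ (Fin.last n))) (fun i => x (σ i.castSucc))

/-- `‖u‖_G`, the supremum of `|(u xₙ)(x₁,…,x_{n-1})| / ‖x₁,…,xₙ‖_G` over tuples with
nonzero Gähler norm. -/
noncomputable def opnormG {X : Type*} [NormedAddCommGroup X] [NormedSpace ℝ X] {n : ℕ}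
    (u : X →L[ℝ] ContinuousMultilinearMap ℝ (fun _ : Fin n => X) ℝ) : ℝ :=
  sSup {r | ∃ x : Fin (n + 1) → X, gahler x ≠ 0 ∧
    r = |u (x (Fin.last n)) (fun i => x i.castSucc)| / gahler x}
set_option maxHeartbeats 1000000

open Finset Function Filter Topology

namespace Stmt15Aux

variable {X : Type*} [NormedAddCommGroup X] [NormedSpace ℝ X]

/-! ### Basic facts about the Gähler set -/

def gset {m : ℕ} (x : Fin m → X) : Set ℝ :=
  {r | ∃ f : Fin m → (X →L[ℝ] ℝ), (∀ i, ‖f i‖ ≤ 1) ∧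
    r = |Matrix.det (Matrix.of fun i j => f j (x i))|}

lemma gahler_eq {m : ℕ} (x : Fin m → X) : gahler x = sSup (gset x) := rfl

lemma gset_nonneg {m : ℕ} (x : Fin m → X) : ∀ r ∈ gset x, 0 ≤ r := by
  rintro r ⟨f, -, rfl⟩; exact abs_nonneg _

lemma gset_le {m : ℕ} (x : Fin m → X) :
    ∀ r ∈ gset x, r ≤ (m.factorial : ℝ) * ∏ i, ‖x i‖ := by
  rintro r ⟨f, hf, rfl⟩
  rw [Matrix.det_apply]
  calc |∑ σ : Equiv.Perm (Fin m), Equiv.Perm.sign σ • ∏ i, (Matrix.of fun i j => f j (x i)) (σ i) i|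
      ≤ ∑ σ : Equiv.Perm (Fin m), |Equiv.Perm.sign σ • ∏ i, (Matrix.of fun i j => f j (x i)) (σ i) i| :=
        Finset.abs_sum_le_sum_abs _ _
    _ ≤ ∑ _σ : Equiv.Perm (Fin m), ∏ i, ‖x i‖ := by
        refine Finset.sum_le_sum fun σ _ => ?_
        have h1 : |Equiv.Perm.sign σ • ∏ i, (Matrix.of fun i j => f j (x i)) (σ i) i|
            = |∏ i, f i (x (σ i))| := by
          rcases Int.units_eq_one_or (Equiv.Perm.sign σ) with h | h <;>
            simp [h, Units.smul_def, Matrix.of_apply]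
        rw [h1, Finset.abs_prod]
        have h2 : ∏ i, |f i (x (σ i))| ≤ ∏ i, ‖x (σ i)‖ := by
          refine Finset.prod_le_prod (fun i _ => abs_nonneg _) fun i _ => ?_
          calc |f i (x (σ i))| = ‖f i (x (σ i))‖ := (Real.norm_eq_abs _).symm
            _ ≤ ‖f i‖ * ‖x (σ i)‖ := (f i).le_opNorm _
            _ ≤ 1 * ‖x (σ i)‖ := by
                exact mul_le_mul_of_nonneg_right (hf i) (norm_nonneg _)
            _ = ‖x (σ i)‖ := one_mul _
        refine h2.trans ?_
        rw [Equiv.prod_comp σ (fun i => ‖x i‖)]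
    _ = (m.factorial : ℝ) * ∏ i, ‖x i‖ := by
        rw [Finset.sum_const, nsmul_eq_mul]
        congr 2
        simp [Fintype.card_perm]

lemma zero_mem_gset {m : ℕ} (x : Fin (m + 1) → X) : (0 : ℝ) ∈ gset x := by
  refine ⟨fun _ => 0, by simp, ?_⟩
  rw [Matrix.det_eq_zero_of_row_eq_zero 0 (fun j => by simp)]
  simp

lemma gset_bddAbove {m : ℕ} (x : Fin m → X) : BddAbove (gset x) :=
  ⟨(m.factorial : ℝ) * ∏ i, ‖x i‖, fun _ hr => gset_le x _ hr⟩

lemma gahler_nonneg {m : ℕ} (x : Fin m → X) : 0 ≤ gahler x :=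
  Real.sSup_nonneg (gset_nonneg x)

lemma gahler_le {m : ℕ} (x : Fin (m + 1) → X) :
    gahler x ≤ ((m + 1).factorial : ℝ) * ∏ i, ‖x i‖ :=
  csSup_le ⟨0, zero_mem_gset x⟩ (gset_le x)

lemma abs_det_le_gahler {m : ℕ} (x : Fin m → X) (f : Fin m → (X →L[ℝ] ℝ))
    (hf : ∀ i, ‖f i‖ ≤ 1) :
    |Matrix.det (Matrix.of fun i j => f j (x i))| ≤ gahler x :=
  le_csSup (gset_bddAbove x) ⟨f, hf, rfl⟩

end Stmt15Aux
namespace Stmt15Aux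

variable {X : Type*} [NormedAddCommGroup X] [NormedSpace ℝ X]

section Milicic

variable (τp τm : X → X → ℝ)
variable (hτp : ∀ x y : X, Filter.Tendsto (fun t : ℝ => (‖x + t • y‖ - ‖x‖) / t)
      (nhdsWithin 0 (Set.Ioi 0)) (nhds (τp x y)))
variable (hτm : ∀ x y : X, Filter.Tendsto (fun t : ℝ => (‖x + t • y‖ - ‖x‖) / t)
      (nhdsWithin 0 (Set.Iio 0)) (nhds (τm x y)))

include hτp hτm

lemma milicic_self (x : X) : milicic τp τm x x = ‖x‖ ^ 2 := by
  have hquot : ∀ t : ℝ, -1 < t → t ≠ 0 → (‖x + t • x‖ - ‖x‖) / t = ‖x‖ := by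
    intro t h1 h0
    have hx : x + t • x = (1 + t) • x := by rw [add_smul, one_smul]
    rw [hx, norm_smul, Real.norm_eq_abs, abs_of_pos (by linarith)]
    field_simp
    ring
  have hp : τp x x = ‖x‖ := by
    have hev : (fun t : ℝ => (‖x + t • x‖ - ‖x‖) / t) =ᶠ[nhdsWithin 0 (Set.Ioi 0)]
        fun _ => ‖x‖ := by
      filter_upwards [self_mem_nhdsWithin] with t ht
      exact hquot t (by linarith [Set.mem_Ioi.mp ht]) (ne_of_gt ht)
    exact tendsto_nhds_unique (hτp x x) (tendsto_const_nhds.congr' hev.symm)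
  have hm : τm x x = ‖x‖ := by
    have hev : (fun t : ℝ => (‖x + t • x‖ - ‖x‖) / t) =ᶠ[nhdsWithin 0 (Set.Iio 0)]
        fun _ => ‖x‖ := by
      filter_upwards [Ioo_mem_nhdsLT_of_mem (show (0:ℝ) ∈ Set.Ioc (-1) 0 by norm_num)]
        with t ht
      exact hquot t ht.1 (ne_of_lt ht.2)
    exact tendsto_nhds_unique (hτm x x) (tendsto_const_nhds.congr' hev.symm)
  rw [milicic, hp, hm]
  ring

lemma abs_milicic_le (x y : X) : |milicic τp τm x y| ≤ ‖x‖ * ‖y‖ := by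
  have hnum : ∀ t : ℝ, |‖x + t • y‖ - ‖x‖| ≤ |t| * ‖y‖ := by
    intro t
    calc |‖x + t • y‖ - ‖x‖| ≤ ‖x + t • y - x‖ := abs_norm_sub_norm_le _ _
      _ = ‖t • y‖ := by rw [add_sub_cancel_left]
      _ = |t| * ‖y‖ := by rw [norm_smul, Real.norm_eq_abs]
  have hp : |τp x y| ≤ ‖y‖ := by
    refine le_of_tendsto (hτp x y).abs ?_
    filter_upwards [self_mem_nhdsWithin] with t ht
    have ht' : (0:ℝ) < t := ht
    rw [abs_div, abs_of_pos ht', div_le_iff₀ ht']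
    calc |‖x + t • y‖ - ‖x‖| ≤ |t| * ‖y‖ := hnum t
      _ = ‖y‖ * t := by rw [abs_of_pos ht']; ring
  have hm : |τm x y| ≤ ‖y‖ := by
    refine le_of_tendsto (hτm x y).abs ?_
    filter_upwards [self_mem_nhdsWithin] with t ht
    have ht' : t < 0 := ht
    rw [abs_div, abs_of_neg ht', div_le_iff₀ (by linarith : (0:ℝ) < -t)]
    calc |‖x + t • y‖ - ‖x‖| ≤ |t| * ‖y‖ := hnum t
      _ = ‖y‖ * (-t) := by rw [abs_of_neg ht']; ring
  rw [milicic, abs_mul, abs_of_nonneg (by positivity : (0:ℝ) ≤ ‖x‖ / 2)]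
  have h2 : |τm x y + τp x y| ≤ 2 * ‖y‖ := (abs_add_le _ _).trans (by linarith)
  calc ‖x‖ / 2 * |τm x y + τp x y| ≤ ‖x‖ / 2 * (2 * ‖y‖) :=
        mul_le_mul_of_nonneg_left h2 (by positivity)
    _ = ‖x‖ * ‖y‖ := by ring

end Milicic

lemma milicic_zero_left (τp τm : X → X → ℝ) (y : X) : milicic τp τm 0 y = 0 := by
  simp [milicic]

/-- The continuous linear functional `g(x, ·)`, given property (G). -/
noncomputable def gfun (τp τm : X → X → ℝ)
    (hG : ∀ x : X, IsLinearMap ℝ (fun y => milicic τp τm x y))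
    (habs : ∀ x y : X, |milicic τp τm x y| ≤ ‖x‖ * ‖y‖) (x : X) : X →L[ℝ] ℝ :=
  LinearMap.mkContinuous (IsLinearMap.mk' _ (hG x)) ‖x‖
    (fun y => by rw [Real.norm_eq_abs]; simpa using habs x y)

lemma gfun_apply (τp τm : X → X → ℝ) (hG : ∀ x : X, IsLinearMap ℝ (fun y => milicic τp τm x y))
    (habs : ∀ x y : X, |milicic τp τm x y| ≤ ‖x‖ * ‖y‖) (x y : X) :
    gfun τp τm hG habs x y = milicic τp τm x y := rfl

lemma gfun_norm_le (τp τm : X → X → ℝ)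
    (hG : ∀ x : X, IsLinearMap ℝ (fun y => milicic τp τm x y))
    (habs : ∀ x y : X, |milicic τp τm x y| ≤ ‖x‖ * ‖y‖) (x : X) :
    ‖gfun τp τm hG habs x‖ ≤ ‖x‖ :=
  LinearMap.mkContinuous_norm_le _ (norm_nonneg x) _

end Stmt15Aux
namespace Stmt15Aux

variable {X : Type*} [NormedAddCommGroup X] [NormedSpace ℝ X]

/-! ### Alternating map invariance under column operations -/

lemma alt_update_span_zero {m : ℕ} (F : X [⋀^Fin m]→ₗ[ℝ] ℝ) (z : Fin m → X) (p : Fin m)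
    (v : X) (hv : v ∈ Submodule.span ℝ (z '' {i | i ≠ p})) :
    F (Function.update z p v) = 0 := by
  induction hv using Submodule.span_induction with
  | mem w hw =>
    obtain ⟨i, hi, rfl⟩ := hw
    exact F.map_update_self z (Ne.symm hi)
  | zero =>
    exact F.toMultilinearMap.map_coord_zero p (by simp)
  | add a b _ _ ha hb =>
    rw [F.map_update_add, ha, hb, add_zero]
  | smul c a _ ha =>
    rw [F.map_update_smul, ha, smul_zero]

lemma alt_update_sub_span {m : ℕ} (F : X [⋀^Fin m]→ₗ[ℝ] ℝ) (z : Fin m → X) (p : Fin m)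
    (v : X) (hv : v ∈ Submodule.span ℝ (z '' {i | i ≠ p})) :
    F (Function.update z p (z p - v)) = F z := by
  rw [F.map_update_sub, alt_update_span_zero F z p v hv, sub_zero, Function.update_eq_self]

lemma alt_eq_of_close {m : ℕ} (F : X [⋀^Fin m]→ₗ[ℝ] ℝ) (x y : ℕ → X)
    (hspan : ∀ k < m, x k - y k ∈ Submodule.span ℝ (y '' Set.Iio k)) :
    F (fun i : Fin m => y i) = F (fun i : Fin m => x i) := by
  suffices H : ∀ k, k ≤ m → F (fun i : Fin m => if i.val < k then y i else x i)
      = F (fun i : Fin m => x i) by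
    have h := H m le_rfl
    simpa [Fin.is_lt] using h
  intro k hk
  induction k with
  | zero => simp
  | succ k IH =>
    have hk' : k < m := hk
    set w : Fin m → X := fun i => if i.val < k then y i else x i with hw
    have hupdate : (fun i : Fin m => if i.val < k + 1 then y i else x i)
        = Function.update w ⟨k, hk'⟩ (y k) := by
      funext i
      rcases eq_or_ne i ⟨k, hk'⟩ with rfl | hi
      · simp [w]
      · have hvi : i.val ≠ k := fun h => hi (Fin.ext h)
        rw [Function.update_of_ne hi]
        simp only [hw]
        by_cases h2 : i.val < k
        · simp [h2, Nat.lt_succ_of_lt h2]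
        · have h3 : ¬ i.val < k + 1 := by omega
          simp [h2, h3]
    have hyk : y k = w ⟨k, hk'⟩ - (x k - y k) := by
      have : w ⟨k, hk'⟩ = x k := by simp [hw]
      rw [this]; abel
    have hmem : x k - y k ∈ Submodule.span ℝ (w '' {i | i ≠ (⟨k, hk'⟩ : Fin m)}) := by
      refine Submodule.span_mono ?_ (hspan k hk')
      rintro _ ⟨j, hj, rfl⟩
      have hjk : j < k := hj
      refine ⟨⟨j, lt_trans hjk hk'⟩, ?_, ?_⟩
      · simp only [Set.mem_setOf_eq]
        intro h
        exact absurd (Fin.mk.injEq .. ▸ h) (by omega)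
      · simp [hw, hjk]
    rw [hupdate, hyk, alt_update_sub_span F w ⟨k, hk'⟩ _ hmem]
    exact IH (le_of_lt hk')

/-! ### Gram–Schmidt orthogonalization with respect to the Miličić functional -/

section GS

variable (τp τm : X → X → ℝ)
variable (hG : ∀ x : X, IsLinearMap ℝ (fun y => milicic τp τm x y))
variable (hself : ∀ x : X, milicic τp τm x x = ‖x‖ ^ 2)

include hG hself in
lemma exists_solve (w : ℕ → X) (t : X) :
    ∀ m : ℕ, (∀ i j, i < j → j < m → milicic τp τm (w i) (w j) = 0) →
      ∃ v ∈ Submodule.span ℝ (w '' Set.Iio m), ∀ i < m, milicic τp τm (w i) (t - v) = 0 := by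
  intro m
  induction m with
  | zero => exact fun _ => ⟨0, Submodule.zero_mem _, fun i hi => absurd hi (by omega)⟩
  | succ m IH =>
    intro horth
    obtain ⟨v', hv'mem, hv'⟩ := IH (fun i j hij hj => horth i j hij (by omega))
    have hmono : Submodule.span ℝ (w '' Set.Iio m) ≤
        Submodule.span ℝ (w '' Set.Iio (m + 1)) :=
      Submodule.span_mono (Set.image_mono (Set.Iio_subset_Iio (by omega)))
    by_cases hwm : w m = 0
    · refine ⟨v', hmono hv'mem, fun i hi => ?_⟩
      rcases Nat.lt_succ_iff_lt_or_eq.mp hi with h | rfl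
      · exact hv' i h
      · rw [hwm, milicic_zero_left]
    · set c : ℝ := milicic τp τm (w m) (t - v') / ‖w m‖ ^ 2 with hc
      refine ⟨v' + c • w m, ?_, ?_⟩
      · exact Submodule.add_mem _ (hmono hv'mem)
          (Submodule.smul_mem _ _ (Submodule.subset_span ⟨m, by simp, rfl⟩))
      · intro i hi
        have hL : ∀ a : X, milicic τp τm a (t - (v' + c • w m))
            = milicic τp τm a (t - v') - c * milicic τp τm a (w m) := by
          intro a
          have hsub : t - (v' + c • w m) = (t - v') - c • w m := by abel
          have h1 : ∀ z z' : X, milicic τp τm a (z - z')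
              = milicic τp τm a z - milicic τp τm a z' := by
            intro z z'
            have := (IsLinearMap.mk' _ (hG a)).map_sub z z'
            simpa using this
          have h2 : milicic τp τm a (c • w m) = c * milicic τp τm a (w m) := by
            have h3 := (hG a).map_smul c (w m)
            simp only [smul_eq_mul] at h3
            exact h3
          rw [hsub, h1, h2]
        have hnorm : ‖w m‖ ^ 2 ≠ 0 := pow_ne_zero _ (norm_ne_zero_iff.mpr hwm)
        have hlast : milicic τp τm (w m) (t - (v' + c • w m)) = 0 := by
          rw [hL, hself, hc, div_mul_cancel₀ _ hnorm, sub_self]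
        rcases Nat.lt_succ_iff_lt_or_eq.mp hi with h | he
        · rw [hL, hv' i h, horth i m h (by omega), mul_zero, sub_zero]
        · rw [he]; exact hlast
    
include hG hself in
lemma exists_gso (m : ℕ) (x : ℕ → X) :
    ∃ y : ℕ → X, (∀ k < m, x k - y k ∈ Submodule.span ℝ (y '' Set.Iio k)) ∧
      (∀ i j, i < j → j < m → milicic τp τm (y i) (y j) = 0) := by
  induction m with
  | zero => exact ⟨x, fun k hk => absurd hk (by omega), fun i j _ hj => absurd hj (by omega)⟩
  | succ m IH =>
    obtain ⟨y, hspan, horth⟩ := IH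
    obtain ⟨v, hvmem, hv⟩ := exists_solve τp τm hG hself y (x m) m horth
    set y' := Function.update y m (x m - v) with hy'
    have hagree : ∀ j < m, y' j = y j := fun j hj =>
      Function.update_of_ne (by omega) _ _
    have himg : ∀ k ≤ m, y' '' Set.Iio k = y '' Set.Iio k := by
      intro k hk
      refine Set.image_congr fun j hj => hagree j (lt_of_lt_of_le hj hk)
    refine ⟨y', ?_, ?_⟩
    · intro k hk
      rcases Nat.lt_succ_iff_lt_or_eq.mp hk with h | rfl
      · rw [hagree k h, himg k h.le]
        exact hspan k h
      · rw [himg k le_rfl]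
        have : y' k = x k - v := Function.update_self _ _ _
        rw [this]
        simpa using hvmem
    · intro i j hij hj
      rcases Nat.lt_succ_iff_lt_or_eq.mp hj with h | rfl
      · rw [hagree i (lt_trans hij h), hagree j h]
        exact horth i j hij h
      · rw [hagree i hij]
        show milicic τp τm (y i) (Function.update y j (x j - v) j) = 0
        rw [Function.update_self]
        exact hv i hij

end GS

end Stmt15Aux
namespace Stmt15Aux

variable {X : Type*} [NormedAddCommGroup X] [NormedSpace ℝ X] {n : ℕ}

/-! ### The alternating map attached to an antisymmetric operator -/

noncomputable def multOf (u : X →L[ℝ] ContinuousMultilinearMap ℝ (fun _ : Fin n => X) ℝ) :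
    MultilinearMap ℝ (fun _ : Fin (n + 1) => X) ℝ where
  toFun x := u (x (Fin.last n)) (fun i => x i.castSucc)
  map_update_add' := by
    intro dec x k a b
    induction k using Fin.lastCases with
    | last =>
      have h1 : ∀ w : X, (fun i : Fin n => Function.update x (Fin.last n) w i.castSucc)
          = fun i => x i.castSucc := by
        intro w; funext i
        exact Function.update_of_ne (Fin.castSucc_lt_last i).ne _ _
      simp only [h1, Function.update_self, map_add, ContinuousMultilinearMap.add_apply]
    | cast j =>
      have h2 : ∀ w : X, Function.update x j.castSucc w (Fin.last n) = x (Fin.last n) :=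
        fun w => Function.update_of_ne (Fin.castSucc_lt_last j).ne' _ _
      have h3 : ∀ w : X, (fun i : Fin n => Function.update x j.castSucc w i.castSucc)
          = Function.update (fun i => x i.castSucc) j w := by
        intro w; funext i
        rcases eq_or_ne i j with rfl | hij
        · simp
        · rw [Function.update_of_ne (fun h => hij (Fin.castSucc_inj.mp h)),
            Function.update_of_ne hij]
      rw [h2, h2, h2, h3, h3, h3]
      exact (u (x (Fin.last n))).map_update_add _ j a b
  map_update_smul' := by
    intro dec x k c a
    induction k using Fin.lastCases with
    | last =>
      have h1 : ∀ w : X, (fun i : Fin n => Function.update x (Fin.last n) w i.castSucc)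
          = fun i => x i.castSucc := by
        intro w; funext i
        exact Function.update_of_ne (Fin.castSucc_lt_last i).ne _ _
      simp only [h1, Function.update_self, map_smul, ContinuousMultilinearMap.smul_apply,
        smul_eq_mul]
    | cast j =>
      have h2 : ∀ w : X, Function.update x j.castSucc w (Fin.last n) = x (Fin.last n) :=
        fun w => Function.update_of_ne (Fin.castSucc_lt_last j).ne' _ _
      have h3 : ∀ w : X, (fun i : Fin n => Function.update x j.castSucc w i.castSucc)
          = Function.update (fun i => x i.castSucc) j w := by
        intro w; funext i
        rcases eq_or_ne i j with rfl | hij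
        · simp
        · rw [Function.update_of_ne (fun h => hij (Fin.castSucc_inj.mp h)),
            Function.update_of_ne hij]
      rw [h2, h2, h3, h3]
      exact (u (x (Fin.last n))).map_update_smul _ j c a

noncomputable def altOf (u : X →L[ℝ] ContinuousMultilinearMap ℝ (fun _ : Fin n => X) ℝ)
    (hu : IsAntisym u) : X [⋀^Fin (n + 1)]→ₗ[ℝ] ℝ :=
  { multOf u with
    map_eq_zero_of_eq' := by
      intro x i j hxij hij
      have h := hu x (Equiv.swap i j)
      have hxσ : ∀ k, x (Equiv.swap i j k) = x k := by
        intro k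
        rcases eq_or_ne k i with rfl | hki
        · rw [Equiv.swap_apply_left]; exact hxij.symm
        rcases eq_or_ne k j with rfl | hkj
        · rw [Equiv.swap_apply_right]; exact hxij
        · rw [Equiv.swap_apply_of_ne_of_ne hki hkj]
      rw [Equiv.Perm.sign_swap hij] at h
      simp only [hxσ] at h
      push_cast at h
      show u (x (Fin.last n)) (fun i => x i.castSucc) = 0
      linarith }

lemma altOf_apply (u : X →L[ℝ] ContinuousMultilinearMap ℝ (fun _ : Fin n => X) ℝ)
    (hu : IsAntisym u) (x : Fin (n + 1) → X) :
    altOf u hu x = u (x (Fin.last n)) (fun i => x i.castSucc) := rfl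

/-! ### Positivity of the Gähler norm on linearly independent tuples -/

lemma gahler_pos_of_li (x : Fin (n + 1) → X) (hx : LinearIndependent ℝ x) :
    0 < gahler x := by
  classical
  set V := Submodule.span ℝ (Set.range x) with hV
  haveI : FiniteDimensional ℝ V := FiniteDimensional.span_of_finite ℝ (Set.finite_range x)
  set b : Module.Basis (Fin (n + 1)) ℝ V := Module.Basis.span hx with hb
  have hFj : ∀ j, ∃ F : X →L[ℝ] ℝ, ∀ v : V,
      F v = LinearMap.toContinuousLinearMap (b.coord j) v := by
    intro j
    obtain ⟨F, hF, -⟩ := exists_extension_norm_eq V (LinearMap.toContinuousLinearMap (b.coord j))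
    exact ⟨F, hF⟩
  choose F hF using hFj
  have hdual : ∀ i j, F j (x i) = if i = j then 1 else 0 := by
    intro i j
    have hxi : x i = (b i : X) := (congrArg Subtype.val (Module.Basis.span_apply hx i)).symm
    rw [hxi, hF j (b i)]
    simp only [LinearMap.coe_toContinuousLinearMap', Module.Basis.coord_apply, Module.Basis.repr_self]
    exact Finsupp.single_apply
  set c : Fin (n + 1) → ℝ := fun j => (max 1 ‖F j‖)⁻¹ with hc
  have hcpos : ∀ j, 0 < c j := fun j =>
    inv_pos.mpr (lt_of_lt_of_le one_pos (le_max_left _ _))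
  set f : Fin (n + 1) → (X →L[ℝ] ℝ) := fun j => c j • F j with hf
  have hfnorm : ∀ j, ‖f j‖ ≤ 1 := by
    intro j
    have hfj : f j = c j • F j := rfl
    rw [hfj]
    calc ‖c j • F j‖ ≤ ‖c j‖ * ‖F j‖ := ContinuousLinearMap.opNorm_smul_le _ _
      _ = c j * ‖F j‖ := by rw [Real.norm_eq_abs, abs_of_pos (hcpos j)]
      _ ≤ c j * max 1 ‖F j‖ :=
          mul_le_mul_of_nonneg_left (le_max_right _ _) (hcpos j).le
      _ = 1 := inv_mul_cancel₀ (ne_of_gt (lt_of_lt_of_le one_pos (le_max_left _ _)))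
  have hdiag : (Matrix.of fun i j => f j (x i)) = Matrix.diagonal c := by
    ext i j
    simp only [Matrix.of_apply, hf, ContinuousLinearMap.smul_apply, smul_eq_mul, hdual,
      Matrix.diagonal]
    rcases eq_or_ne i j with rfl | hij
    · simp
    · simp [hij]
  have hdet : |Matrix.det (Matrix.of fun i j => f j (x i))| = ∏ j, c j := by
    rw [hdiag, Matrix.det_diagonal, abs_of_pos (Finset.prod_pos fun j _ => hcpos j)]
  have hpos : 0 < ∏ j, c j := Finset.prod_pos fun j _ => hcpos j
  calc (0:ℝ) < ∏ j, c j := hpos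
    _ = |Matrix.det (Matrix.of fun i j => f j (x i))| := hdet.symm
    _ ≤ gahler x := abs_det_le_gahler x f hfnorm

end Stmt15Aux
namespace Stmt15Aux

variable {X : Type*} [NormedAddCommGroup X] [NormedSpace ℝ X] {n : ℕ}

lemma key_ineq (τp τm : X → X → ℝ)
    (hG : ∀ x : X, IsLinearMap ℝ (fun y => milicic τp τm x y))
    (hself : ∀ x : X, milicic τp τm x x = ‖x‖ ^ 2)
    (habs : ∀ x y : X, |milicic τp τm x y| ≤ ‖x‖ * ‖y‖)
    (u : X →L[ℝ] ContinuousMultilinearMap ℝ (fun _ : Fin n => X) ℝ)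
    (hu : IsAntisym u) (x : Fin (n + 1) → X) :
    |u (x (Fin.last n)) (fun i => x i.castSucc)| ≤ ‖u‖ * gahler x := by
  classical
  set x' : ℕ → X := fun k => if h : k < n + 1 then x ⟨k, h⟩ else 0 with hx'
  obtain ⟨y, hspan, horth⟩ := exists_gso τp τm hG hself (n + 1) x'
  have hxz : (fun i : Fin (n + 1) => x' i.val) = x := by
    funext i
    simp [hx', i.isLt]
    intro h; exact absurd h (by have := i.isLt; omega)
  set z : Fin (n + 1) → X := fun i => y i.val with hz
  have hAeq : ∀ F : X [⋀^Fin (n + 1)]→ₗ[ℝ] ℝ, F z = F x := by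
    intro F
    have h := alt_eq_of_close F x' y hspan
    rw [hxz] at h
    rw [hz]
    exact h
  have hgeq : gahler z = gahler x := by
    have hdetEq : ∀ f : Fin (n + 1) → (X →L[ℝ] ℝ),
        Matrix.det (Matrix.of fun i j => f j (z i))
          = Matrix.det (Matrix.of fun i j => f j (x i)) := by
      intro f
      exact hAeq ((Matrix.detRowAlternating).compLinearMap
        (LinearMap.pi fun j => (f j : X →ₗ[ℝ] ℝ)))
    rw [gahler_eq, gahler_eq]
    congr 1
    ext r
    constructor
    · rintro ⟨f, hf, rfl⟩
      exact ⟨f, hf, congrArg abs (hdetEq f)⟩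
    · rintro ⟨f, hf, rfl⟩
      exact ⟨f, hf, (congrArg abs (hdetEq f)).symm⟩
  have hAx : u (x (Fin.last n)) (fun i => x i.castSucc)
      = u (z (Fin.last n)) (fun i => z i.castSucc) := by
    have h1 := hAeq (altOf u hu)
    rw [altOf_apply, altOf_apply] at h1
    exact h1.symm
  by_cases hzero : ∃ k, z k = 0
  · obtain ⟨k, hk⟩ := hzero
    have hgz : gahler z = 0 := by
      refine le_antisymm (csSup_le ⟨0, zero_mem_gset z⟩ ?_) (gahler_nonneg z)
      rintro r ⟨f, hf, rfl⟩
      rw [Matrix.det_eq_zero_of_row_eq_zero k (fun j => by simp [Matrix.of_apply, hk])]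
      simp
    have hAz : u (z (Fin.last n)) (fun i => z i.castSucc) = 0 := by
      rw [← altOf_apply u hu]
      exact (altOf u hu).toMultilinearMap.map_coord_zero k hk
    rw [hAx, hAz, ← hgeq, hgz, mul_zero, abs_zero]
  · push_neg at hzero
    set f : Fin (n + 1) → (X →L[ℝ] ℝ) :=
      fun j => (‖z j‖)⁻¹ • gfun τp τm hG habs (z j) with hfdef
    have hfnorm : ∀ j, ‖f j‖ ≤ 1 := by
      intro j
      have hfj : f j = (‖z j‖)⁻¹ • gfun τp τm hG habs (z j) := rfl
      rw [hfj]
      calc ‖(‖z j‖)⁻¹ • gfun τp τm hG habs (z j)‖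
          ≤ ‖(‖z j‖)⁻¹‖ * ‖gfun τp τm hG habs (z j)‖ :=
            ContinuousLinearMap.opNorm_smul_le _ _
        _ ≤ (‖z j‖)⁻¹ * ‖z j‖ := by
            rw [Real.norm_eq_abs, abs_of_nonneg (inv_nonneg.mpr (norm_nonneg _))]
            exact mul_le_mul_of_nonneg_left (gfun_norm_le τp τm hG habs (z j))
              (inv_nonneg.mpr (norm_nonneg _))
        _ = 1 := inv_mul_cancel₀ (norm_ne_zero_iff.mpr (hzero j))
    have htri : Matrix.BlockTriangular (Matrix.of fun i j => f j (z i)) id := by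
      intro i j hij
      have hij' : (j : ℕ) < (i : ℕ) := hij
      have hfj : f j = (‖z j‖)⁻¹ • gfun τp τm hG habs (z j) := rfl
      show f j (z i) = 0
      rw [hfj, ContinuousLinearMap.smul_apply, gfun_apply, smul_eq_mul]
      have hml : milicic τp τm (z j) (z i) = 0 := by
        have := horth j.val i.val hij' i.isLt
        simpa [hz] using this
      rw [hml, mul_zero]
    have hdiagval : ∀ i, (Matrix.of fun i j => f j (z i)) i i = ‖z i‖ := by
      intro i
      have hfj : f i = (‖z i‖)⁻¹ • gfun τp τm hG habs (z i) := rfl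
      show f i (z i) = ‖z i‖
      rw [hfj, ContinuousLinearMap.smul_apply, gfun_apply, smul_eq_mul, hself]
      have hni : ‖z i‖ ≠ 0 := norm_ne_zero_iff.mpr (hzero i)
      field_simp
    have hdet : Matrix.det (Matrix.of fun i j => f j (z i)) = ∏ i, ‖z i‖ := by
      rw [Matrix.det_of_upperTriangular htri]
      exact Finset.prod_congr rfl fun i _ => hdiagval i
    have hprod_le : ∏ i, ‖z i‖ ≤ gahler z := by
      have h := abs_det_le_gahler z f hfnorm
      rwa [hdet, abs_of_nonneg (Finset.prod_nonneg fun i _ => norm_nonneg _)] at h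
    rw [hAx, ← hgeq]
    calc |u (z (Fin.last n)) (fun i => z i.castSucc)|
        = ‖u (z (Fin.last n)) (fun i => z i.castSucc)‖ := (Real.norm_eq_abs _).symm
      _ ≤ ‖u (z (Fin.last n))‖ * ∏ i : Fin n, ‖z i.castSucc‖ :=
          (u (z (Fin.last n))).le_opNorm _
      _ ≤ (‖u‖ * ‖z (Fin.last n)‖) * ∏ i : Fin n, ‖z i.castSucc‖ :=
          mul_le_mul_of_nonneg_right (u.le_opNorm _)
            (Finset.prod_nonneg fun i _ => norm_nonneg _)
      _ = ‖u‖ * ∏ i : Fin (n + 1), ‖z i‖ := by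
          rw [Fin.prod_univ_castSucc]
          ring
      _ ≤ ‖u‖ * gahler z := mul_le_mul_of_nonneg_left hprod_le (norm_nonneg u)

end Stmt15Aux
theorem stmt15 {X : Type*} [NormedAddCommGroup X] [NormedSpace ℝ X] (n : ℕ)
    (hdim : ((n + 1 : ℕ) : Cardinal) ≤ Module.rank ℝ X)
    (τp τm : X → X → ℝ)
    (hτp : ∀ x y : X, Filter.Tendsto (fun t : ℝ => (‖x + t • y‖ - ‖x‖) / t)
      (nhdsWithin 0 (Set.Ioi 0)) (nhds (τp x y)))
    (hτm : ∀ x y : X, Filter.Tendsto (fun t : ℝ => (‖x + t • y‖ - ‖x‖) / t)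
      (nhdsWithin 0 (Set.Iio 0)) (nhds (τm x y)))
    (hG : ∀ x : X, IsLinearMap ℝ (fun y => milicic τp τm x y)) :
    ∀ u v : X →L[ℝ] ContinuousMultilinearMap ℝ (fun _ : Fin n => X) ℝ,
      IsAntisym u → IsAntisym v → ∀ a : ℝ,
        0 ≤ opnormG u ∧
        (opnormG u = 0 ↔ u = 0) ∧
        opnormG (a • u) = |a| * opnormG u ∧
        opnormG (u + v) ≤ opnormG u + opnormG v ∧
        opnormG u ≤ ‖u‖ ∧ ‖u‖ ≤ ((n + 1).factorial : ℝ) * opnormG u := by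
  classical
  intro u v hu hv a
  have hself : ∀ x : X, milicic τp τm x x = ‖x‖ ^ 2 :=
    Stmt15Aux.milicic_self τp τm hτp hτm
  have habs : ∀ x y : X, |milicic τp τm x y| ≤ ‖x‖ * ‖y‖ :=
    Stmt15Aux.abs_milicic_le τp τm hτp hτm
  -- an independent tuple of length n+1
  obtain ⟨s, hcard, hs⟩ := le_rank_iff_exists_linearIndependent_finset.mp hdim
  have hx0 : ∃ x0 : Fin (n + 1) → X, LinearIndependent ℝ x0 := by
    set e : Fin (n + 1) → ↥((s : Set X)) :=
      fun i => ⟨(s.equivFin.symm (finCongr hcard.symm i) : X), by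
        simpa using (s.equivFin.symm (finCongr hcard.symm i)).2⟩ with he
    have hinj : Function.Injective e := by
      intro i j hij
      have h1 : s.equivFin.symm (finCongr hcard.symm i)
          = s.equivFin.symm (finCongr hcard.symm j) :=
        Subtype.ext (congrArg Subtype.val hij)
      have h2 := s.equivFin.symm.injective h1
      exact (finCongr hcard.symm).injective h2
    exact ⟨fun i => (e i : X), hs.comp e hinj⟩
  obtain ⟨x0, hx0li⟩ := hx0
  have hg0 : gahler x0 ≠ 0 := (Stmt15Aux.gahler_pos_of_li x0 hx0li).ne'
  set S : (X →L[ℝ] ContinuousMultilinearMap ℝ (fun _ : Fin n => X) ℝ) → Set ℝ :=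
    fun w => {r | ∃ x : Fin (n + 1) → X, gahler x ≠ 0 ∧
      r = |w (x (Fin.last n)) (fun i => x i.castSucc)| / gahler x} with hSdef
  have hopn : ∀ w, opnormG w = sSup (S w) := fun w => rfl
  have hne : ∀ w, (S w).Nonempty := fun w => ⟨_, ⟨x0, hg0, rfl⟩⟩
  have hnonneg : ∀ w, ∀ r ∈ S w, 0 ≤ r := by
    rintro w r ⟨x, hx, rfl⟩
    exact div_nonneg (abs_nonneg _) (Stmt15Aux.gahler_nonneg x)
  have hbdd : ∀ w : X →L[ℝ] ContinuousMultilinearMap ℝ (fun _ : Fin n => X) ℝ, IsAntisym w → ∀ r ∈ S w, r ≤ ‖w‖ := by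
    rintro w hw r ⟨x, hx, rfl⟩
    have hpos : 0 < gahler x := lt_of_le_of_ne (Stmt15Aux.gahler_nonneg x) (Ne.symm hx)
    rw [div_le_iff₀ hpos]
    exact Stmt15Aux.key_ineq τp τm hG hself habs w hw x
  have hbddAbove : BddAbove (S u) := ⟨‖u‖, fun r hr => hbdd u hu r hr⟩
  have hbddAbove_v : BddAbove (S v) := ⟨‖v‖, fun r hr => hbdd v hv r hr⟩
  have hle_norm : ∀ w : X →L[ℝ] ContinuousMultilinearMap ℝ (fun _ : Fin n => X) ℝ, IsAntisym w → opnormG w ≤ ‖w‖ := by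
    intro w hw
    rw [hopn]
    exact csSup_le (hne w) (hbdd w hw)
  have hkey2 : ∀ (w : X →L[ℝ] ContinuousMultilinearMap ℝ (fun _ : Fin n => X) ℝ),
      IsAntisym w → ∀ x : Fin (n + 1) → X,
      |w (x (Fin.last n)) (fun i => x i.castSucc)| ≤ opnormG w * gahler x := by
    intro w hw x
    by_cases hgx : gahler x = 0
    · have hdep : ¬ LinearIndependent ℝ x := fun h =>
        (Stmt15Aux.gahler_pos_of_li x h).ne' hgx
      have hz : w (x (Fin.last n)) (fun i => x i.castSucc) = 0 := by
        rw [← Stmt15Aux.altOf_apply w hw]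
        exact (Stmt15Aux.altOf w hw).map_linearDependent x hdep
      rw [hz, hgx, abs_zero, mul_zero]
    · have hpos : 0 < gahler x := lt_of_le_of_ne (Stmt15Aux.gahler_nonneg x) (Ne.symm hgx)
      have hmem : |w (x (Fin.last n)) (fun i => x i.castSucc)| / gahler x ∈ S w :=
        ⟨x, hgx, rfl⟩
      have h1 := le_csSup ⟨‖w‖, fun r hr => hbdd w hw r hr⟩ hmem
      rw [div_le_iff₀ hpos] at h1
      rw [hopn]
      exact h1
  have hopnonneg : ∀ w : X →L[ℝ] ContinuousMultilinearMap ℝ (fun _ : Fin n => X) ℝ, 0 ≤ opnormG w := by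
    intro w
    rw [hopn]
    exact Real.sSup_nonneg (hnonneg w)
  have hfact : ∀ (w : X →L[ℝ] ContinuousMultilinearMap ℝ (fun _ : Fin n => X) ℝ),
      IsAntisym w → ‖w‖ ≤ ((n + 1).factorial : ℝ) * opnormG w := by
    intro w hw
    have hC : 0 ≤ ((n + 1).factorial : ℝ) * opnormG w :=
      mul_nonneg (by positivity) (hopnonneg w)
    refine ContinuousLinearMap.opNorm_le_bound w hC ?_
    intro zz
    have hC2 : 0 ≤ (((n + 1).factorial : ℝ) * opnormG w) * ‖zz‖ :=
      mul_nonneg hC (norm_nonneg _)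
    refine ContinuousMultilinearMap.opNorm_le_bound hC2 ?_
    intro m
    have hsnoc_last : (Fin.snoc m zz : Fin (n + 1) → X) (Fin.last n) = zz :=
      Fin.snoc_last _ _
    have hsnoc_cast : (fun i : Fin n => (Fin.snoc m zz : Fin (n + 1) → X) i.castSucc) = m :=
      funext fun i => Fin.snoc_castSucc _ _ _
    have h1 : ‖w zz m‖
        = |w ((Fin.snoc m zz : Fin (n + 1) → X) (Fin.last n))
            (fun i => (Fin.snoc m zz : Fin (n + 1) → X) i.castSucc)| := by
      rw [hsnoc_last, hsnoc_cast, Real.norm_eq_abs]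
    rw [h1]
    calc |w ((Fin.snoc m zz : Fin (n + 1) → X) (Fin.last n))
            (fun i => (Fin.snoc m zz : Fin (n + 1) → X) i.castSucc)|
        ≤ opnormG w * gahler (Fin.snoc m zz : Fin (n + 1) → X) := hkey2 w hw _
      _ ≤ opnormG w * (((n + 1).factorial : ℝ)
            * ∏ i, ‖(Fin.snoc m zz : Fin (n + 1) → X) i‖) :=
          mul_le_mul_of_nonneg_left (Stmt15Aux.gahler_le _) (hopnonneg w)
      _ = (((n + 1).factorial : ℝ) * opnormG w) * ‖zz‖ * ∏ i : Fin n, ‖m i‖ := by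
          rw [Fin.prod_univ_castSucc]
          simp only [Fin.snoc_last, Fin.snoc_castSucc]
          ring
      _ = (((n + 1).factorial : ℝ) * opnormG w) * ‖zz‖ * ∏ i : Fin n, ‖m i‖ := rfl
  have hzero : ∀ w : X →L[ℝ] ContinuousMultilinearMap ℝ (fun _ : Fin n => X) ℝ,
      (∀ z mm, w z mm = 0) → opnormG w = 0 := by
    intro w hwz
    rw [hopn]
    refine le_antisymm (csSup_le (hne w) ?_) (Real.sSup_nonneg (hnonneg w))
    rintro r ⟨x, hx, rfl⟩
    rw [hwz, abs_zero, zero_div]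
  refine ⟨hopnonneg u, ⟨?_, ?_⟩, ?_, ?_, hle_norm u hu, hfact u hu⟩
  · -- opnormG u = 0 → u = 0
    intro h
    have h1 := hfact u hu
    rw [h, mul_zero] at h1
    exact (ContinuousLinearMap.opNorm_zero_iff u).mp (le_antisymm h1 (norm_nonneg _))
  · -- u = 0 → opnormG u = 0
    rintro rfl
    exact hzero 0 (fun z mm => by simp)
  · -- homogeneity
    rcases eq_or_ne a 0 with rfl | ha
    · have h0 : (0 : ℝ) • u = 0 := by ext z m; simp
      rw [h0, abs_zero, zero_mul]
      exact hzero 0 (fun z mm => by simp)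
    · have hmemiff : ∀ r, r ∈ S (a • u) ↔ ∃ s' ∈ S u, r = |a| * s' := by
        intro r
        constructor
        · rintro ⟨x, hx, rfl⟩
          refine ⟨|u (x (Fin.last n)) (fun i => x i.castSucc)| / gahler x, ⟨x, hx, rfl⟩, ?_⟩
          simp only [ContinuousLinearMap.smul_apply, ContinuousMultilinearMap.smul_apply,
            smul_eq_mul, abs_mul, mul_div_assoc]
        · rintro ⟨s', ⟨x, hx, rfl⟩, rfl⟩
          refine ⟨x, hx, ?_⟩
          simp only [ContinuousLinearMap.smul_apply, ContinuousMultilinearMap.smul_apply,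
            smul_eq_mul, abs_mul, mul_div_assoc]
      have hbdda : BddAbove (S (a • u)) := by
        refine ⟨|a| * ‖u‖, ?_⟩
        rintro r hr
        obtain ⟨s', hs', rfl⟩ := (hmemiff r).mp hr
        exact mul_le_mul_of_nonneg_left (hbdd u hu s' hs') (abs_nonneg a)
      rw [hopn, hopn]
      apply le_antisymm
      · refine csSup_le (hne _) ?_
        intro r hr
        obtain ⟨s', hs', rfl⟩ := (hmemiff r).mp hr
        exact mul_le_mul_of_nonneg_left (le_csSup hbddAbove hs') (abs_nonneg a)
      · have hstep : sSup (S u) ≤ sSup (S (a • u)) / |a| := by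
          refine csSup_le (hne u) ?_
          intro s' hs'
          have hmem2 : |a| * s' ∈ S (a • u) := (hmemiff _).mpr ⟨s', hs', rfl⟩
          have h2 := le_csSup hbdda hmem2
          rw [le_div_iff₀ (abs_pos.mpr ha)]
          linarith [h2]
        calc |a| * sSup (S u) ≤ |a| * (sSup (S (a • u)) / |a|) :=
              mul_le_mul_of_nonneg_left hstep (abs_nonneg a)
          _ = sSup (S (a • u)) := by field_simp
  · -- triangle inequality
    rw [hopn, hopn, hopn]
    refine csSup_le (hne _) ?_
    rintro r ⟨x, hx, rfl⟩
    have hpos : 0 < gahler x := lt_of_le_of_ne (Stmt15Aux.gahler_nonneg x) (Ne.symm hx)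
    have hsplit : |(u + v) (x (Fin.last n)) (fun i => x i.castSucc)|
        ≤ |u (x (Fin.last n)) (fun i => x i.castSucc)|
          + |v (x (Fin.last n)) (fun i => x i.castSucc)| := by
      simp only [ContinuousLinearMap.add_apply, ContinuousMultilinearMap.add_apply]
      exact abs_add_le _ _
    calc |(u + v) (x (Fin.last n)) (fun i => x i.castSucc)| / gahler x
        ≤ (|u (x (Fin.last n)) (fun i => x i.castSucc)|
            + |v (x (Fin.last n)) (fun i => x i.castSucc)|) / gahler x := by
          gcongr
      _ = |u (x (Fin.last n)) (fun i => x i.castSucc)| / gahler x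
            + |v (x (Fin.last n)) (fun i => x i.castSucc)| / gahler x := add_div _ _ _
      _ ≤ sSup (S u) + sSup (S v) :=
          add_le_add (le_csSup hbddAbove ⟨x, hx, rfl⟩) (le_csSup hbddAbove_v ⟨x, hx, rfl⟩)
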